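/- Let γ ∈ (0,1), v > 0, C_1 > 0 and W ≥ 1 be constants, and let f : [1,∞) → (0,∞) satisfy f(p) ≤ exp( C_1 · p^{1+v} ) for all p ≥ 1. Then there exist constants C_2 > 0 and C_3 ≥ 1, depending only on C_1, v and W, such that for every u ≥ e, inf_{p ≥ 1} [ f(p) · W^{p+1} · u^{−p} ] ≤ C_3 · exp( − C_2 · (ln u)^{1 + 1/v} ). -/

import Mathlib

open Set Filter

/-- If `f(p) ≤ exp(C₁·p^{1+v})` for `p ≥ 1`, then for constants `C₂ > 0`, `C₃ ≥ 1`
depending only on `C₁`, `v` and `W`,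
`inf_{p ≥ 1} f(p)·W^{p+1}·u^{−p} ≤ C₃·exp(−C₂·(ln u)^{1+1/v})` for every `u ≥ e`. -/
theorem inf_polynomial_trade_off (γ : ℝ) (hγ : γ ∈ Ioo (0 : ℝ) 1)
    (v C₁ W : ℝ) (hv : 0 < v) (hC₁ : 0 < C₁) (hW : 1 ≤ W) :
    ∃ C₂ C₃ : ℝ, 0 < C₂ ∧ 1 ≤ C₃ ∧
      ∀ f : ℝ → ℝ, (∀ p : ℝ, 1 ≤ p → 0 < f p) →
        (∀ p : ℝ, 1 ≤ p → f p ≤ Real.exp (C₁ * p ^ (1 + v))) →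
        ∀ u : ℝ, Real.exp 1 ≤ u →
          sInf {x : ℝ | ∃ p : ℝ, 1 ≤ p ∧ x = f p * W ^ (p + 1) * u ^ (-p)} ≤
            C₃ * Real.exp (-(C₂ * Real.log u ^ (1 + 1 / v))) := by
  have hW0 : (0:ℝ) < W := lt_of_lt_of_le one_pos hW
  have hlogW : 0 ≤ Real.log W := Real.log_nonneg hW
  set c : ℝ := (1 + 4 * C₁) ^ (-(1 / v)) with hc_def
  have hbase : (1:ℝ) ≤ 1 + 4 * C₁ := by nlinarith
  have hbase0 : (0:ℝ) < 1 + 4 * C₁ := by linarith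
  have hc0 : 0 < c := Real.rpow_pos_of_pos hbase0 _
  have hc1 : c ≤ 1 := Real.rpow_le_one_of_one_le_of_nonpos hbase (by
    have : 0 < 1 / v := by positivity
    linarith)
  have hcv : c ^ v = (1 + 4 * C₁)⁻¹ := by
    rw [hc_def, ← Real.rpow_mul hbase0.le]
    have : -(1 / v) * v = -1 := by field_simp
    rw [this, Real.rpow_neg_one]
  have hcC₁ : C₁ * c ^ v ≤ 1 / 4 := by
    rw [hcv, inv_eq_one_div, mul_one_div, div_le_div_iff₀ hbase0 (by norm_num)]
    nlinarith
  set L₀ : ℝ := max (c ^ (-v)) (8 * Real.log W + 1) with hL₀_def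
  have hL₀1 : (1:ℝ) ≤ L₀ := le_max_of_le_right (by linarith)
  have hL₀0 : (0:ℝ) < L₀ := by linarith
  refine ⟨c / 2, Real.exp (C₁ + 2 * Real.log W + c / 2 * L₀ ^ (1 + 1 / v)), by positivity,
    Real.one_le_exp (by positivity), ?_⟩
  intro f hfpos hf u hu
  have hu0 : (0:ℝ) < u := lt_of_lt_of_le (Real.exp_pos 1) hu
  set L : ℝ := Real.log u with hL_def
  have hL1 : (1:ℝ) ≤ L := by
    rw [hL_def, ← Real.log_exp 1]
    exact Real.log_le_log (Real.exp_pos 1) hu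
  have hL0 : (0:ℝ) < L := by linarith
  -- The set is bounded below by 0
  have hbdd : BddBelow {x : ℝ | ∃ p : ℝ, 1 ≤ p ∧ x = f p * W ^ (p + 1) * u ^ (-p)} := by
    refine ⟨0, fun x hx => ?_⟩
    obtain ⟨p, hp, rfl⟩ := hx
    have := hfpos p hp
    positivity
  -- key bound for any admissible p
  have key : ∀ p : ℝ, 1 ≤ p →
      f p * W ^ (p + 1) * u ^ (-p) ≤
        Real.exp (C₁ * p ^ (1 + v) + Real.log W * (p + 1) - L * p) := by
    intro p hp
    have h1 : f p * W ^ (p + 1) * u ^ (-p) ≤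
        Real.exp (C₁ * p ^ (1 + v)) * W ^ (p + 1) * u ^ (-p) := by
      have hWp : (0:ℝ) ≤ W ^ (p + 1) := (Real.rpow_pos_of_pos hW0 _).le
      have hup : (0:ℝ) ≤ u ^ (-p) := (Real.rpow_pos_of_pos hu0 _).le
      exact mul_le_mul_of_nonneg_right (mul_le_mul_of_nonneg_right (hf p hp) hWp) hup
    have h2 : Real.exp (C₁ * p ^ (1 + v)) * W ^ (p + 1) * u ^ (-p) =
        Real.exp (C₁ * p ^ (1 + v) + Real.log W * (p + 1) - L * p) := by
      rw [Real.rpow_def_of_pos hW0, Real.rpow_def_of_pos hu0, ← Real.exp_add, ← Real.exp_add]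
      ring_nf
      rw [hL_def]
    linarith [h1, h2.le]
  rcases le_or_gt L L₀ with hcase | hcase
  · -- small u: take p = 1
    have hmem : f 1 * W ^ ((1:ℝ) + 1) * u ^ (-(1:ℝ)) ∈
        {x : ℝ | ∃ p : ℝ, 1 ≤ p ∧ x = f p * W ^ (p + 1) * u ^ (-p)} := ⟨1, le_refl 1, rfl⟩
    refine le_trans (csInf_le hbdd hmem) ?_
    refine le_trans (key 1 le_rfl) ?_
    rw [← Real.exp_add]
    apply Real.exp_le_exp.mpr
    have hone : (1:ℝ) ^ (1 + v) = 1 := Real.one_rpow _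
    rw [hone]
    have hLL : L ^ (1 + 1/v) ≤ L₀ ^ (1 + 1/v) :=
      Real.rpow_le_rpow hL0.le hcase (by positivity)
    nlinarith [hLL, hL1, hc0]
  · -- large u: take p = c * L^(1/v)
    set p : ℝ := c * L ^ (1/v) with hp_def
    have hLL₀ : c ^ (-v) ≤ L := le_of_lt (lt_of_le_of_lt (le_max_left _ _) hcase)
    have hLW : 8 * Real.log W + 1 ≤ L := le_of_lt (lt_of_le_of_lt (le_max_right _ _) hcase)
    have hLv0 : (0:ℝ) < L ^ (1/v) := Real.rpow_pos_of_pos hL0 _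
    have hp1 : (1:ℝ) ≤ p := by
      have h1 : (c ^ (-v)) ^ (1/v) ≤ L ^ (1/v) :=
        Real.rpow_le_rpow (by positivity) hLL₀ (by positivity)
      have h2 : (c ^ (-v)) ^ (1/v) = c⁻¹ := by
        rw [← Real.rpow_mul hc0.le]
        have hv1 : -v * (1/v) = -1 := by field_simp
        rw [hv1, Real.rpow_neg_one]
      rw [h2] at h1
      rw [hp_def]
      calc (1:ℝ) = c * c⁻¹ := (mul_inv_cancel₀ hc0.ne').symm
        _ ≤ c * L ^ (1/v) := by
            exact mul_le_mul_of_nonneg_left h1 hc0.le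
    have hmem : f p * W ^ (p + 1) * u ^ (-p) ∈
        {x : ℝ | ∃ q : ℝ, 1 ≤ q ∧ x = f q * W ^ (q + 1) * u ^ (-q)} := ⟨p, hp1, rfl⟩
    refine le_trans (csInf_le hbdd hmem) ?_
    refine le_trans (key p hp1) ?_
    have hexp : C₁ * p ^ (1 + v) + Real.log W * (p + 1) - L * p ≤
        -(c / 2 * L ^ (1 + 1 / v)) := by
      have hLsum : L ^ (1/v) * L = L ^ (1 + 1/v) := by
        nth_rewrite 2 [← Real.rpow_one L]
        rw [← Real.rpow_add hL0]
        ring_nf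
      have hpow : p ^ (1 + v) = c ^ (1 + v) * L ^ (1 + 1/v) := by
        rw [hp_def, Real.mul_rpow hc0.le hLv0.le, ← Real.rpow_mul hL0.le]
        congr 1
        field_simp
        ring
      have hcc : c ^ (1 + v) = c * c ^ v := by
        rw [Real.rpow_add hc0, Real.rpow_one]
      have h1 : C₁ * p ^ (1 + v) ≤ (1/4) * (c * L ^ (1 + 1/v)) := by
        rw [hpow, hcc]
        have hLp0 : (0:ℝ) ≤ L ^ (1 + 1/v) := by positivity
        nlinarith [mul_le_mul_of_nonneg_right hcC₁ (mul_nonneg hc0.le hLp0)]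
      have h3 : L * p = c * L ^ (1 + 1/v) := by
        rw [hp_def, ← hLsum]; ring
      have h2 : Real.log W * (p + 1) ≤ (1/4) * (c * L ^ (1 + 1/v)) := by
        have hp0 : (0:ℝ) < p := lt_of_lt_of_le one_pos hp1
        have e1 : Real.log W * (p + 1) ≤ Real.log W * (2 * p) :=
          mul_le_mul_of_nonneg_left (by linarith) hlogW
        have e2 : Real.log W * (2 * p) ≤ (L / 8) * (2 * p) :=
          mul_le_mul_of_nonneg_right (by linarith) (by linarith)
        have e3 : (L / 8) * (2 * p) = (1/4) * (L * p) := by ring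
        rw [e3, h3] at e2
        linarith
      linarith
    calc Real.exp (C₁ * p ^ (1 + v) + Real.log W * (p + 1) - L * p)
        ≤ Real.exp (-(c / 2 * L ^ (1 + 1 / v))) := Real.exp_le_exp.mpr hexp
      _ ≤ Real.exp (C₁ + 2 * Real.log W + c / 2 * L₀ ^ (1 + 1 / v)) *
          Real.exp (-(c / 2 * L ^ (1 + 1 / v))) := by
          nth_rewrite 1 [← one_mul (Real.exp _)]
          exact mul_le_mul_of_nonneg_right (Real.one_le_exp (by positivity))
            (Real.exp_pos _).le
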